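/- If G is a connected finite simple graph of order n ≥ 2, then 2·y_G ≤ n + n_2(G) + 2·n_1(G) − 2 and y_G ≤ n, where n_i(G) denotes the number of vertices of degree i in G (i.e., y_G ≤ min{(n + n_2(G) + 2·n_1(G))/2 − 1, n}). -/

import Mathlib

open SimpleGraph

/-- The number of connected components of a graph. -/
noncomputable def numComp {V : Type*} (G : SimpleGraph V) : ℕ :=
  Nat.card G.ConnectedComponent

/-- `y_G(A) = 2 c(G - A) - |A| - 1`. -/
noncomputable def yVal {V : Type*} (G : SimpleGraph V) (A : Set (Sym2 V)) : ℤ :=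
  2 * (numComp (G.deleteEdges A) : ℤ) - (A.ncard : ℤ) - 1

/-- `y_G = max_{A ⊆ E(G)} y_G(A)`. -/
noncomputable def yMax {V : Type*} (G : SimpleGraph V) : ℤ :=
  sSup { y : ℤ | ∃ A ⊆ G.edgeSet, yVal G A = y }

open Finset

lemma reach_del {V : Type*} {H : SimpleGraph V} {u v x y : V}
    (h : H.Reachable x y) :
    (H.deleteEdges {s(u,v)}).Reachable x y ∨
      (((H.deleteEdges {s(u,v)}).Reachable x u ∨ (H.deleteEdges {s(u,v)}).Reachable x v) ∧
       ((H.deleteEdges {s(u,v)}).Reachable y u ∨ (H.deleteEdges {s(u,v)}).Reachable y v)) := by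
  obtain ⟨p⟩ := h
  induction p with
  | nil => exact Or.inl (Reachable.refl _)
  | @cons a b c hab p ih =>
    by_cases hm : s(a, b) ∈ ({s(u,v)} : Set (Sym2 V))
    · simp only [Set.mem_singleton_iff, Sym2.eq_iff] at hm
      have hRa : (H.deleteEdges {s(u,v)}).Reachable a u ∨
          (H.deleteEdges {s(u,v)}).Reachable a v := by
        rcases hm with ⟨rfl, rfl⟩ | ⟨rfl, rfl⟩
        · exact Or.inl (Reachable.refl _)
        · exact Or.inr (Reachable.refl _)
      have hRb : (H.deleteEdges {s(u,v)}).Reachable b u ∨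
          (H.deleteEdges {s(u,v)}).Reachable b v := by
        rcases hm with ⟨rfl, rfl⟩ | ⟨rfl, rfl⟩
        · exact Or.inr (Reachable.refl _)
        · exact Or.inl (Reachable.refl _)
      right
      refine ⟨hRa, ?_⟩
      rcases ih with h1 | ⟨h1, h2⟩
      · rcases hRb with h | h
        · exact Or.inl (h1.symm.trans h)
        · exact Or.inr (h1.symm.trans h)
      · exact h2
    · have hadj : (H.deleteEdges {s(u,v)}).Adj a b := by
        rw [deleteEdges_adj]; exact ⟨hab, hm⟩
      rcases ih with h1 | ⟨h1, h2⟩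
      · exact Or.inl (hadj.reachable.trans h1)
      · right
        refine ⟨?_, h2⟩
        rcases h1 with h | h
        · exact Or.inl (hadj.reachable.trans h)
        · exact Or.inr (hadj.reachable.trans h)



lemma numComp_del_single_le {V : Type*} [Finite V] (H : SimpleGraph V) (e : Sym2 V) :
    numComp (H.deleteEdges {e}) ≤ numComp H + 1 := by
  classical
  induction e with
  | _ u v =>
  set H' := H.deleteEdges {s(u,v)} with hH'
  let φ : H' →g H := Hom.ofLE (deleteEdges_le _)
  have hφ : ∀ w : V, φ w = w := fun _ => rfl
  let f : H'.ConnectedComponent → Option H.ConnectedComponent := fun c =>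
    if c = H'.connectedComponentMk u then none else some (c.map φ)
  have hinj : Function.Injective f := by
    intro c₁ c₂ hf
    by_cases h₁ : c₁ = H'.connectedComponentMk u <;>
      by_cases h₂ : c₂ = H'.connectedComponentMk u
    · rw [h₁, h₂]
    · simp only [f, if_pos h₁, if_neg h₂] at hf; exact absurd hf (by simp)
    · simp only [f, if_neg h₁, if_pos h₂] at hf; exact absurd hf (by simp)
    · simp only [f, if_neg h₁, if_neg h₂, Option.some.injEq] at hf
      obtain ⟨x, hx⟩ := c₁.exists_rep
      obtain ⟨y, hy⟩ := c₂.exists_rep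
      subst hx hy
      have hr : H.Reachable x y := ConnectedComponent.eq.mp hf
      rcases reach_del (u := u) (v := v) hr with h | ⟨ha, hb⟩
      · exact ConnectedComponent.eq.mpr h
      · have hxv : H'.Reachable x v := by
          rcases ha with h | h
          · exact absurd (ConnectedComponent.eq.mpr h) h₁
          · exact h
        have hyv : H'.Reachable y v := by
          rcases hb with h | h
          · exact absurd (ConnectedComponent.eq.mpr h) h₂
          · exact h
        exact ConnectedComponent.eq.mpr (hxv.trans hyv.symm)
  haveI hf1 : Finite H.ConnectedComponent := Quot.finite _
  haveI hf2 : Finite H'.ConnectedComponent := Quot.finite _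
  haveI hf3 : Fintype H.ConnectedComponent := Fintype.ofFinite _
  have := Nat.card_le_card_of_injective f hinj
  have hopt : Nat.card (Option H.ConnectedComponent) = Nat.card H.ConnectedComponent + 1 := by
    have : Fintype H.ConnectedComponent := Fintype.ofFinite _
    simp [Nat.card_eq_fintype_card]
  rw [hopt] at this
  exact this

lemma numComp_deleteEdges_le {V : Type*} [Finite V] (G : SimpleGraph V)
    {A : Set (Sym2 V)} (hA : A.Finite) :
    numComp (G.deleteEdges A) ≤ numComp G + A.ncard := by
  classical
  refine Set.Finite.induction_on (motive := fun A _ => numComp (G.deleteEdges A) ≤ numComp G + A.ncard) A hA (by simp) ?_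
  rintro e A heA hAfin ih
  · have h1 : (G.deleteEdges A).deleteEdges {e} = G.deleteEdges (insert e A) := by
      rw [deleteEdges_deleteEdges, Set.union_singleton]
    rw [← h1, Set.ncard_insert_of_notMem heA hAfin]
    calc numComp ((G.deleteEdges A).deleteEdges {e}) ≤ numComp (G.deleteEdges A) + 1 :=
          numComp_del_single_le _ _
      _ ≤ numComp G + A.ncard + 1 := by omega
      _ = numComp G + (A.ncard + 1) := by omega

lemma key_count {V : Type*} [Finite V] (G : SimpleGraph V) (hG : G.Connected)
    (hnt : 2 ≤ Nat.card V) {A : Set (Sym2 V)} (hA : A ⊆ G.edgeSet) :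
    4 * (numComp (G.deleteEdges A) : ℤ) ≤
      (Nat.card V : ℤ) + ({v : V | (G.neighborSet v).ncard = 2}.ncard : ℤ)
      + 2 * ({v : V | (G.neighborSet v).ncard = 1}.ncard : ℤ) + 2 * (A.ncard : ℤ) := by
  classical
  haveI : Fintype V := Fintype.ofFinite V
  set H := G.deleteEdges A with hH
  haveI : Finite H.ConnectedComponent := Quot.finite _
  haveI : Fintype H.ConnectedComponent := Fintype.ofFinite _
  -- degree facts
  have hdeg : ∀ v, (G.neighborSet v).ncard = G.degree v := by
    intro v
    rw [Set.ncard_eq_toFinset_card']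
    congr 1
  have hd_le : ∀ v, H.degree v ≤ G.degree v := by
    intro v
    apply card_le_card
    intro w hw
    rw [mem_neighborFinset] at hw ⊢
    exact (deleteEdges_adj.mp hw).1
  have hd1 : ∀ v : V, 1 ≤ G.degree v := by
    intro v
    have hnt' : Nontrivial V := Finite.one_lt_card_iff_nontrivial.mp (by omega)
    obtain ⟨w, hw⟩ := exists_ne v
    obtain ⟨p⟩ := hG.preconnected v w
    cases p with
    | nil => exact absurd rfl hw
    | cons h _ =>
      rw [Nat.succ_le_iff, degree_pos_iff_exists_adj]
      exact ⟨_, h⟩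
  -- the weight function
  set g : V → ℤ := fun v => 1 + (if G.degree v = 2 then 1 else 0)
      + 2 * (if G.degree v = 1 then 1 else 0) + (G.degree v : ℤ) - (H.degree v : ℤ) with hg
  -- fiberwise sum
  have hfib : ∑ K : H.ConnectedComponent,
      ∑ v ∈ univ.filter (fun v => H.connectedComponentMk v = K), g v = ∑ v, g v :=
    sum_fiberwise_of_maps_to (fun v _ => mem_univ _) g
  -- per component bound
  have hcomp : ∀ K : H.ConnectedComponent,
      (4 : ℤ) ≤ ∑ v ∈ univ.filter (fun v => H.connectedComponentMk v = K), g v := by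
    intro K
    set F := univ.filter (fun v => H.connectedComponentMk v = K) with hF
    have hne : F.Nonempty := by
      obtain ⟨x, hx⟩ := K.exists_rep
      exact ⟨x, by simp only [hF, mem_filter, mem_univ, true_and]; exact hx⟩
    set k := F.card with hk
    have hk1 : 1 ≤ k := card_pos.mpr hne
    have hub : ∀ v ∈ F, (H.degree v : ℤ) ≤ (k : ℤ) - 1 := by
      intro v hv
      have hsub : H.neighborFinset v ⊆ F.erase v := by
        intro w hw
        rw [mem_neighborFinset] at hw
        rw [mem_erase]
        refine ⟨hw.ne', ?_⟩
        simp only [hF, mem_filter, mem_univ, true_and] at hv ⊢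
        rw [← hv]
        exact ConnectedComponent.eq.mpr hw.symm.reachable
      have := card_le_card hsub
      rw [card_erase_of_mem hv] at this
      have hvk : (H.degree v) ≤ k - 1 := this
      omega
    have hgl : ∀ v ∈ F, (1 : ℤ) ≤ g v ∧ (5 : ℤ) - k ≤ g v := by
      intro v hv
      have h1 := hd1 v
      have h2 := hd_le v
      have h3 := hub v hv
      constructor
      · simp only [hg]
        split_ifs <;> push_cast <;> omega
      · simp only [hg]
        split_ifs <;> push_cast at * <;> omega
    have hs1 : (k : ℤ) ≤ ∑ v ∈ F, g v := by
      calc (k : ℤ) = ∑ _v ∈ F, (1 : ℤ) := by simp [hk]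
        _ ≤ ∑ v ∈ F, g v := sum_le_sum (fun v hv => (hgl v hv).1)
    have hs2 : (k : ℤ) * (5 - k) ≤ ∑ v ∈ F, g v := by
      calc (k : ℤ) * (5 - k) = ∑ _v ∈ F, ((5 : ℤ) - k) := by
            rw [sum_const, nsmul_eq_mul]
        _ ≤ ∑ v ∈ F, g v := sum_le_sum (fun v hv => (hgl v hv).2)
    rcases le_or_gt 4 k with h | h
    · have : (4 : ℤ) ≤ (k : ℤ) := by exact_mod_cast h
      linarith
    · interval_cases k <;> push_cast at hs1 hs2 <;> linarith
  -- total
  have htot : 4 * (numComp H : ℤ) ≤ ∑ v, g v := by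
    rw [← hfib]
    have : numComp H = Fintype.card H.ConnectedComponent := Nat.card_eq_fintype_card
    rw [this]
    calc 4 * (Fintype.card H.ConnectedComponent : ℤ)
        = ∑ _K : H.ConnectedComponent, (4 : ℤ) := by
          rw [sum_const, nsmul_eq_mul, card_univ]; ring
      _ ≤ _ := sum_le_sum (fun K _ => hcomp K)
  -- compute the sum
  have hsum : ∑ v, g v = (Nat.card V : ℤ) + ({v : V | (G.neighborSet v).ncard = 2}.ncard : ℤ)
      + 2 * ({v : V | (G.neighborSet v).ncard = 1}.ncard : ℤ) + 2 * (A.ncard : ℤ) := by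
    have e1 : ∑ _v : V, (1 : ℤ) = (Nat.card V : ℤ) := by
      simp [Nat.card_eq_fintype_card]
    have e2 : ∑ v : V, (if G.degree v = 2 then (1:ℤ) else 0)
        = ({v : V | (G.neighborSet v).ncard = 2}.ncard : ℤ) := by
      rw [sum_boole]
      congr 1
      have : {v : V | (G.neighborSet v).ncard = 2} = {v : V | G.degree v = 2} := by
        ext v; simp only [Set.mem_setOf_eq, hdeg v]
      rw [this, Set.ncard_eq_toFinset_card', Set.toFinset_setOf]
    have e3 : ∑ v : V, (if G.degree v = 1 then (1:ℤ) else 0)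
        = ({v : V | (G.neighborSet v).ncard = 1}.ncard : ℤ) := by
      rw [sum_boole]
      congr 1
      have : {v : V | (G.neighborSet v).ncard = 1} = {v : V | G.degree v = 1} := by
        ext v; simp only [Set.mem_setOf_eq, hdeg v]
      rw [this, Set.ncard_eq_toFinset_card', Set.toFinset_setOf]
    have hEfin : G.edgeSet.Finite := Set.toFinite _
    have hAfin : A.Finite := hEfin.subset hA
    have e4 : ∑ v : V, ((G.degree v : ℤ) - (H.degree v : ℤ)) = 2 * (A.ncard : ℤ) := by
      have hG2 : ∑ v : V, (G.degree v : ℤ) = 2 * (G.edgeSet.ncard : ℤ) := by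
        have h1 : G.edgeSet.ncard = #G.edgeFinset := Set.ncard_eq_toFinset_card' _
        rw [h1]
        exact_mod_cast congrArg (Nat.cast : ℕ → ℤ) (G.sum_degrees_eq_twice_card_edges)
      have hH2 : ∑ v : V, (H.degree v : ℤ) = 2 * (H.edgeSet.ncard : ℤ) := by
        have h1 : H.edgeSet.ncard = #H.edgeFinset := Set.ncard_eq_toFinset_card' _
        rw [h1]
        exact_mod_cast congrArg (Nat.cast : ℕ → ℤ) (H.sum_degrees_eq_twice_card_edges)
      have hES : H.edgeSet = G.edgeSet \ A := G.edgeSet_deleteEdges A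
      have hcard : H.edgeSet.ncard = G.edgeSet.ncard - A.ncard := by
        rw [hES]
        exact Set.ncard_diff hA hAfin
      have hle : A.ncard ≤ G.edgeSet.ncard := Set.ncard_le_ncard hA hEfin
      rw [sum_sub_distrib, hG2, hH2, hcard]
      push_cast [Nat.cast_sub hle]
      try ring
    simp only [hg]
    rw [show (fun v => 1 + (if G.degree v = 2 then (1:ℤ) else 0)
      + 2 * (if G.degree v = 1 then 1 else 0) + (G.degree v : ℤ) - (H.degree v : ℤ))
      = (fun v => (1 + (if G.degree v = 2 then (1:ℤ) else 0)
      + 2 * (if G.degree v = 1 then 1 else 0)) + ((G.degree v : ℤ) - (H.degree v : ℤ))) from by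
        funext v; ring]
    rw [sum_add_distrib, sum_add_distrib, sum_add_distrib, e1, e2, e4]
    rw [← mul_sum, e3]
    try ring
  rw [hsum] at htot
  exact htot


lemma numComp_eq_one {V : Type*} {G : SimpleGraph V} (hG : G.Connected) :
    numComp G = 1 := by
  have hsub : Subsingleton G.ConnectedComponent := by
    constructor
    intro a b
    obtain ⟨x, rfl⟩ := a.exists_rep
    obtain ⟨y, rfl⟩ := b.exists_rep
    exact ConnectedComponent.eq.mpr (hG.preconnected x y)
  have hne : Nonempty G.ConnectedComponent := by
    obtain ⟨v⟩ := hG.nonempty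
    exact ⟨G.connectedComponentMk v⟩
  exact Nat.card_eq_one_iff_unique.mpr ⟨hsub, hne⟩

lemma numComp_le_card {V : Type*} [Finite V] (G : SimpleGraph V) :
    numComp G ≤ Nat.card V :=
  Nat.card_le_card_of_surjective G.connectedComponentMk
    (fun K => by obtain ⟨x, hx⟩ := K.exists_rep; exact ⟨x, hx⟩)

/-- If `G` is a connected finite simple graph of order `n ≥ 2`, then
`2 y_G ≤ n + n₂(G) + 2 n₁(G) - 2` and `y_G ≤ n`, where `n_i(G)` is the number of
vertices of degree `i` in `G`. -/
theorem yMax_le_of_connected_order_ge_two {V : Type*} [Finite V]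
    (G : SimpleGraph V) (hG : G.Connected)
    (n : ℕ) (hn : Nat.card V = n) (h2 : 2 ≤ n) :
    2 * yMax G ≤ (n : ℤ) + ({v : V | (G.neighborSet v).ncard = 2}.ncard : ℤ)
        + 2 * ({v : V | (G.neighborSet v).ncard = 1}.ncard : ℤ) - 2 ∧
    yMax G ≤ (n : ℤ) := by
  have hne : { y : ℤ | ∃ A ⊆ G.edgeSet, yVal G A = y }.Nonempty :=
    ⟨yVal G ∅, ∅, Set.empty_subset _, rfl⟩
  set n2 : ℤ := ({v : V | (G.neighborSet v).ncard = 2}.ncard : ℤ)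
  set n1 : ℤ := ({v : V | (G.neighborSet v).ncard = 1}.ncard : ℤ)
  have hbound1 : ∀ y ∈ { y : ℤ | ∃ A ⊆ G.edgeSet, yVal G A = y },
      2 * y ≤ (n : ℤ) + n2 + 2 * n1 - 2 := by
    rintro y ⟨A, hA, rfl⟩
    have hkey := key_count G hG (by omega) hA
    rw [hn] at hkey
    unfold yVal
    linarith
  have hbound2 : ∀ y ∈ { y : ℤ | ∃ A ⊆ G.edgeSet, yVal G A = y }, y ≤ (n : ℤ) := by
    rintro y ⟨A, hA, rfl⟩
    have hAfin : A.Finite := (Set.toFinite G.edgeSet).subset hA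
    have hc1 : numComp (G.deleteEdges A) ≤ numComp G + A.ncard :=
      numComp_deleteEdges_le G hAfin
    rw [numComp_eq_one hG] at hc1
    have hc2 : numComp (G.deleteEdges A) ≤ n := hn ▸ numComp_le_card _
    unfold yVal
    have hc1' : (numComp (G.deleteEdges A) : ℤ) ≤ 1 + A.ncard := by exact_mod_cast hc1
    have hc2' : (numComp (G.deleteEdges A) : ℤ) ≤ n := by exact_mod_cast hc2
    linarith
  constructor
  · have hs : yMax G ≤ ((n : ℤ) + n2 + 2 * n1 - 2) / 2 := by
      apply csSup_le hne
      intro y hy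
      have := hbound1 y hy
      omega
    have : 2 * (((n : ℤ) + n2 + 2 * n1 - 2) / 2) ≤ (n : ℤ) + n2 + 2 * n1 - 2 := by omega
    linarith
  · exact csSup_le hne hbound2
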